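/- (Lemma 2.1(vi)) Given two admissible 1D primitive states U⁻ and U⁺ with the HLLC wave speeds s⁻ = min(s_min(U⁻), s_min(U⁺)) and s⁺ = max(s_max(U⁻), s_max(U⁺)), one has 4(A⁻)² - (s⁻A⁻ + B⁻)² > 0 and 4(A⁺)² - (s⁺A⁺ + B⁺)² > 0. -/

import Mathlib

noncomputable section

namespace SRHD1D

/-- Lorentz factor `γ = (1 - u²)^(-1/2)`. -/
def lorentz (u : ℝ) : ℝ := 1 / Real.sqrt (1 - u ^ 2)

/-- Specific enthalpy `h = 1 + Γ p / ((Γ - 1) ρ)` of a perfect gas. -/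
def enthalpy (G r p : ℝ) : ℝ := 1 + G * p / ((G - 1) * r)

/-- Sound speed `c_s = √(Γ p / (ρ h))`. -/
def soundSpeed (G r p : ℝ) : ℝ := Real.sqrt (G * p / (r * enthalpy G r p))

/-- Conserved rest-mass density `D = ρ γ`. -/
def Dc (r u : ℝ) : ℝ := r * lorentz u

/-- Conserved momentum `m = ρ h γ² u`. -/
def mc (G r u p : ℝ) : ℝ := r * enthalpy G r p * lorentz u ^ 2 * u

/-- Conserved total energy `E = ρ h γ² - p`. -/
def Ec (G r u p : ℝ) : ℝ := r * enthalpy G r p * lorentz u ^ 2 - p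

/-- Minimum characteristic speed `s_min = (u - c_s)/(1 - c_s u)`. -/
def sMin (G r u p : ℝ) : ℝ := (u - soundSpeed G r p) / (1 - soundSpeed G r p * u)

/-- Maximum characteristic speed `s_max = (u + c_s)/(1 + c_s u)`. -/
def sMax (G r u p : ℝ) : ℝ := (u + soundSpeed G r p) / (1 + soundSpeed G r p * u)

lemma one_lt_enthalpy (G r p : ℝ) (hG1 : 1 < G) (hr : 0 < r) (hp : 0 < p) :
    1 < enthalpy G r p := by
  have h1 : 0 < (G - 1) * r := by nlinarith
  have h2 : 0 < G * p / ((G - 1) * r) := div_pos (by nlinarith) h1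
  rw [enthalpy]; linarith

lemma cs_sq (G r p : ℝ) (hG1 : 1 < G) (hr : 0 < r) (hp : 0 < p) :
    soundSpeed G r p ^ 2 = G * p / (r * enthalpy G r p) := by
  have hh := one_lt_enthalpy G r p hG1 hr hp
  have : (0:ℝ) ≤ G * p / (r * enthalpy G r p) :=
    le_of_lt (div_pos (by nlinarith) (mul_pos hr (by linarith)))
  rw [soundSpeed, Real.sq_sqrt this]

lemma cs_pos (G r p : ℝ) (hG1 : 1 < G) (hr : 0 < r) (hp : 0 < p) :
    0 < soundSpeed G r p := by
  have hh := one_lt_enthalpy G r p hG1 hr hp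
  exact Real.sqrt_pos.mpr (div_pos (by nlinarith) (mul_pos hr (by linarith)))

lemma cs_sq_lt (G r p : ℝ) (hG1 : 1 < G) (hr : 0 < r) (hp : 0 < p) :
    soundSpeed G r p ^ 2 < G - 1 := by
  have hh := one_lt_enthalpy G r p hG1 hr hp
  have hrh : 0 < r * enthalpy G r p := mul_pos hr (by linarith)
  rw [cs_sq G r p hG1 hr hp, div_lt_iff₀ hrh]
  have hne : ((G - 1) * r) ≠ 0 := ne_of_gt (mul_pos (by linarith) hr)
  have hkey : (G - 1) * (r * enthalpy G r p) = (G - 1) * r + G * p := by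
    rw [enthalpy]; linear_combination div_mul_cancel₀ (G * p) hne
  nlinarith [mul_pos (show (0:ℝ) < G - 1 by linarith) hr]

lemma cs_lt_one (G r p : ℝ) (hG1 : 1 < G) (hG2 : G ≤ 2) (hr : 0 < r) (hp : 0 < p) :
    soundSpeed G r p < 1 := by
  have h1 := cs_sq_lt G r p hG1 hr hp
  have h2 := cs_pos G r p hG1 hr hp
  nlinarith [sq_nonneg (1 - soundSpeed G r p)]

lemma neg_one_lt_sMin (G r u p : ℝ) (hG1 : 1 < G) (hG2 : G ≤ 2) (hr : 0 < r)
    (hu : |u| < 1) (hp : 0 < p) : -1 < sMin G r u p := by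
  obtain ⟨hu1, hu2⟩ := abs_lt.mp hu
  have hc0 := cs_pos G r p hG1 hr hp
  have hc1 := cs_lt_one G r p hG1 hG2 hr hp
  have hcu : 0 < 1 - soundSpeed G r p * u := by nlinarith
  rw [sMin, lt_div_iff₀ hcu]
  nlinarith

lemma sMin_neg (G r u p : ℝ) : sMin G r (-u) p = - sMax G r u p := by
  rw [sMin, sMax, show -u - soundSpeed G r p = -(u + soundSpeed G r p) by ring,
    show 1 - soundSpeed G r p * (-u) = 1 + soundSpeed G r p * u by ring, neg_div]

lemma sMax_lt_one (G r u p : ℝ) (hG1 : 1 < G) (hG2 : G ≤ 2) (hr : 0 < r)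
    (hu : |u| < 1) (hp : 0 < p) : sMax G r u p < 1 := by
  have h := neg_one_lt_sMin G r (-u) p hG1 hG2 hr (by rwa [abs_neg]) hp
  rw [sMin_neg] at h; linarith

lemma lorentz_neg (u : ℝ) : lorentz (-u) = lorentz u := by
  rw [lorentz, lorentz, neg_pow]; ring_nf

lemma Ec_neg (G r u p : ℝ) : Ec G r (-u) p = Ec G r u p := by
  rw [Ec, Ec, lorentz_neg]

lemma mc_neg (G r u p : ℝ) : mc G r (-u) p = - mc G r u p := by
  rw [mc, mc, lorentz_neg]; ring

lemma phi_pos (G c u : ℝ) (hG1 : 1 < G) (hc0 : 0 < c) (hc2 : c ^ 2 < G - 1)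
    (hc1 : c < 1) (hu1 : -1 < u) (hu2 : u < 1) :
    0 < (G - c ^ 2 * (1 - u ^ 2)) * (1 + c) ^ 2 - G * (1 - c * u) ^ 2 := by
  have hcsq1 : c ^ 2 < 1 := by nlinarith [mul_pos hc0 (show (0:ℝ) < 1 - c by linarith)]
  have hin : 0 < 2 * G + c * (1 - u) * (G - (1 + c) ^ 2) := by
    rcases le_or_gt 0 (G - (1 + c) ^ 2) with h | h
    · nlinarith [mul_nonneg (mul_nonneg hc0.le (show (0:ℝ) ≤ 1 - u by linarith)) h]
    · nlinarith [mul_nonneg (mul_nonneg hc0.le (show (0:ℝ) ≤ 1 + u by linarith))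
        (show (0:ℝ) ≤ (1 + c) ^ 2 - G by linarith),
        mul_pos hc0 (show (0:ℝ) < G - 1 - c ^ 2 by linarith)]
  have hfac : (G - c ^ 2 * (1 - u ^ 2)) * (1 + c) ^ 2 - G * (1 - c * u) ^ 2
      = c * (1 + u) * (2 * G + c * (1 - u) * (G - (1 + c) ^ 2)) := by ring
  rw [hfac]
  exact mul_pos (mul_pos hc0 (by linarith)) hin

set_option maxHeartbeats 1000000 in
lemma discMin (G r u p s : ℝ) (hG1 : 1 < G) (hG2 : G ≤ 2) (hr : 0 < r) (hu : |u| < 1)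
    (hp : 0 < p) (hs1 : -1 < s) (hs2 : s ≤ sMin G r u p) :
    0 < 4 * (s * Ec G r u p - mc G r u p) ^ 2 -
      (s * (s * Ec G r u p - mc G r u p) + (mc G r u p * (s - u) - p)) ^ 2 := by
  obtain ⟨hu1, hu2⟩ := abs_lt.mp hu
  have hu2' : u ^ 2 < 1 := by nlinarith
  have hne : (1 - u ^ 2 : ℝ) ≠ 0 := ne_of_gt (by linarith)
  have hc0 := cs_pos G r p hG1 hr hp
  have hcsq := cs_sq G r p hG1 hr hp
  have hclt := cs_sq_lt G r p hG1 hr hp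
  have hc1 := cs_lt_one G r p hG1 hG2 hr hp
  have hh := one_lt_enthalpy G r p hG1 hr hp
  have hrh : 0 < r * enthalpy G r p := mul_pos hr (by linarith)
  rw [sMin] at hs2
  obtain ⟨c, hcdef⟩ : ∃ c, soundSpeed G r p = c := ⟨_, rfl⟩
  rw [hcdef] at hc0 hcsq hclt hc1 hs2
  have hg2 : lorentz u ^ 2 = 1 / (1 - u ^ 2) := by
    rw [lorentz, div_pow, one_pow, Real.sq_sqrt (by linarith : (0:ℝ) ≤ 1 - u ^ 2)]
  obtain ⟨W, hWdef⟩ : ∃ W, r * enthalpy G r p * lorentz u ^ 2 = W := ⟨_, rfl⟩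
  have hW : W * (1 - u ^ 2) = r * enthalpy G r p := by
    rw [← hWdef, hg2]; field_simp
  have hW0 : 0 < W := by
    rw [← hWdef, hg2]
    exact mul_pos hrh (div_pos one_pos (by linarith))
  have hcc : c ^ 2 * (W * (1 - u ^ 2)) = G * p := by
    rw [hW, hcsq, div_mul_cancel₀ _ (ne_of_gt hrh)]
  have hcu : 0 < 1 - c * u := by nlinarith
  have hsu : s * (1 - c * u) ≤ u - c := (le_div_iff₀ hcu).mp hs2
  have hrhp : p < r * enthalpy G r p := by
    have h9 : p ≤ G * p / (G - 1) := by
      rw [le_div_iff₀ (show (0:ℝ) < G - 1 by linarith)]; nlinarith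
    have hne1 : (G - 1 : ℝ) ≠ 0 := ne_of_gt (by linarith)
    have hne2 : ((G - 1) * r) ≠ 0 := ne_of_gt (mul_pos (by linarith) hr)
    have h10 : r * enthalpy G r p = r + G * p / (G - 1) := by
      rw [enthalpy]; field_simp
    rw [h10]; linarith
  have hWp : p < W := by
    nlinarith [hW, mul_nonneg hW0.le (sq_nonneg u)]
  have hphi := phi_pos G c u hG1 hc0 hclt hc1 hu1 hu2
  have hk : 0 < c ^ 2 * (1 - u ^ 2) := mul_pos (pow_pos hc0 2) (by linarith)
  have hEnd : W * (1 - c * u) ^ 2 < (W - p) * (1 + c) ^ 2 := by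
    have hid : ((W - p) * (1 + c) ^ 2 - W * (1 - c * u) ^ 2) * (c ^ 2 * (1 - u ^ 2))
        = p * ((G - c ^ 2 * (1 - u ^ 2)) * (1 + c) ^ 2 - G * (1 - c * u) ^ 2) := by
      linear_combination ((1 + c) ^ 2 - (1 - c * u) ^ 2) * hcc
    have h2 := mul_pos hp hphi
    rw [← hid] at h2
    have h3 := div_pos h2 hk
    rw [mul_div_cancel_right₀ _ (ne_of_gt hk)] at h3
    linarith
  have h1s : (1 + c) * (1 - u) ≤ (1 - s) * (1 - c * u) := by nlinarith [hsu]
  have h1spos : 0 < (1 + c) * (1 - u) := mul_pos (by linarith) (by linarith)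
  have hF1 : W * (s - u) * (2 - s - u) + p * (s - 1) ^ 2 < 0 := by
    have hsq : ((1 + c) * (1 - u)) ^ 2 ≤ ((1 - s) * (1 - c * u)) ^ 2 :=
      pow_le_pow_left₀ h1spos.le h1s 2
    have key : W * (1 - u) ^ 2 * (1 - c * u) ^ 2 < (W - p) * (1 - s) ^ 2 * (1 - c * u) ^ 2 := by
      calc W * (1 - u) ^ 2 * (1 - c * u) ^ 2
          = (W * (1 - c * u) ^ 2) * (1 - u) ^ 2 := by ring
        _ < ((W - p) * (1 + c) ^ 2) * (1 - u) ^ 2 :=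
            mul_lt_mul_of_pos_right hEnd (pow_pos (by linarith) 2)
        _ = (W - p) * ((1 + c) * (1 - u)) ^ 2 := by ring
        _ ≤ (W - p) * ((1 - s) * (1 - c * u)) ^ 2 :=
            mul_le_mul_of_nonneg_left hsq (by linarith)
        _ = (W - p) * (1 - s) ^ 2 * (1 - c * u) ^ 2 := by ring
    have hmain : W * (1 - u) ^ 2 < (W - p) * (1 - s) ^ 2 :=
      lt_of_mul_lt_mul_right key (sq_nonneg _)
    nlinarith [hmain]
  have hsltu : s < u := by
    nlinarith [hsu, mul_pos hc0 (show (0:ℝ) < 1 - u ^ 2 by nlinarith), hcu]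
  have hF2 : W * (s - u) * (2 + s + u) - p * (1 + s) ^ 2 < 0 := by
    nlinarith [mul_pos (mul_pos hW0 (show 0 < u - s by linarith))
      (show (0:ℝ) < 2 + s + u by linarith),
      mul_pos hp (pow_pos (show (0:ℝ) < 1 + s by linarith) 2)]
  have hEc : Ec G r u p = W - p := by rw [Ec, hWdef]
  have hmc : mc G r u p = W * u := by rw [mc, hWdef]
  rw [hEc, hmc]
  have hfac : 4 * (s * (W - p) - W * u) ^ 2 -
      (s * (s * (W - p) - W * u) + (W * u * (s - u) - p)) ^ 2
      = (W * (s - u) * (2 - s - u) + p * (s - 1) ^ 2) *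
        (W * (s - u) * (2 + s + u) - p * (1 + s) ^ 2) := by ring
  rw [hfac]
  exact mul_pos_of_neg_of_neg hF1 hF2

lemma discMax (G r u p s : ℝ) (hG1 : 1 < G) (hG2 : G ≤ 2) (hr : 0 < r) (hu : |u| < 1)
    (hp : 0 < p) (hs1 : sMax G r u p ≤ s) (hs2 : s < 1) :
    0 < 4 * (s * Ec G r u p - mc G r u p) ^ 2 -
      (s * (s * Ec G r u p - mc G r u p) + (mc G r u p * (s - u) - p)) ^ 2 := by
  have h := discMin G r (-u) p (-s) hG1 hG2 hr (by rwa [abs_neg]) hp (by linarith)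
    (by rw [sMin_neg]; linarith)
  rw [Ec_neg, mc_neg] at h
  nlinarith [h]

theorem hllc_discriminant_pos (G r1 u1 p1 r2 u2 p2 sm sp A1 A2 B1 B2 : ℝ)
    (hG1 : 1 < G) (hG2 : G ≤ 2)
    (hr1 : 0 < r1) (hu1 : |u1| < 1) (hp1 : 0 < p1)
    (hr2 : 0 < r2) (hu2 : |u2| < 1) (hp2 : 0 < p2)
    (hsm : sm = min (sMin G r1 u1 p1) (sMin G r2 u2 p2))
    (hsp : sp = max (sMax G r1 u1 p1) (sMax G r2 u2 p2))
    (hA1 : A1 = sm * Ec G r1 u1 p1 - mc G r1 u1 p1)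
    (hA2 : A2 = sp * Ec G r2 u2 p2 - mc G r2 u2 p2)
    (hB1 : B1 = mc G r1 u1 p1 * (sm - u1) - p1)
    (hB2 : B2 = mc G r2 u2 p2 * (sp - u2) - p2)
    :
    0 < 4 * A1 ^ 2 - (sm * A1 + B1) ^ 2 ∧ 0 < 4 * A2 ^ 2 - (sp * A2 + B2) ^ 2 := by
  subst hA1 hA2 hB1 hB2
  constructor
  · exact discMin G r1 u1 p1 sm hG1 hG2 hr1 hu1 hp1
      (hsm ▸ lt_min (neg_one_lt_sMin G r1 u1 p1 hG1 hG2 hr1 hu1 hp1)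
        (neg_one_lt_sMin G r2 u2 p2 hG1 hG2 hr2 hu2 hp2))
      (hsm ▸ min_le_left _ _)
  · exact discMax G r2 u2 p2 sp hG1 hG2 hr2 hu2 hp2
      (hsp ▸ le_max_right _ _)
      (hsp ▸ max_lt (sMax_lt_one G r1 u1 p1 hG1 hG2 hr1 hu1 hp1)
        (sMax_lt_one G r2 u2 p2 hG1 hG2 hr2 hu2 hp2))

end SRHD1D
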